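/- Let M ∈ ℕ, Δ ∈ ℂ, and k₁,…,k_M ∈ ℂ with G(a,b) := 1 + exp(i(k_a + k_b)) − 2Δ·exp(i k_a) nonzero for all a ≠ b in {1,…,M}. Define the amplitude A_M(P) := ε(P) · ∏_{1≤j<ℓ≤M} G(Pj, Pℓ)/G(j, ℓ). Then A_M satisfies the vanishing conditions: for every permutation Q of {1,…,M} and every j ∈ {1,…,M−1}, A_M(Q)·G(Q(j+1), Qj) + A_M(Q∘π_j)·G(Qj, Q(j+1)) = 0, where π_j is the transposition of j and j+1 and Q∘π_j applies π_j first (Appendix E.B: the Bethe ansatz amplitudes (E.18) satisfy conditions (E.14)). -/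
import Mathlib


open Finset

/-- `G(a,b) := 1 + exp(i(k_a + k_b)) − 2Δ·exp(i k_a)`. -/
noncomputable def Gfac (M : ℕ) (Δ : ℂ) (k : Fin M → ℂ) (a b : Fin M) : ℂ :=
  1 + Complex.exp (Complex.I * (k a + k b)) - 2 * Δ * Complex.exp (Complex.I * k a)

/-- The coordinate Bethe ansatz amplitude (E.18):
`A_M(P) = ε(P) · ∏_{j<ℓ} G(Pj, Pℓ)/G(j, ℓ)`. -/
noncomputable def ampXXZ (M : ℕ) (Δ : ℂ) (k : Fin M → ℂ) (P : Equiv.Perm (Fin M)) : ℂ :=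
  (Equiv.Perm.sign P : ℤ) *
    ∏ jl ∈ univ.filter (fun jl : Fin M × Fin M => jl.1 < jl.2),
      Gfac M Δ k (P jl.1) (P jl.2) / Gfac M Δ k jl.1 jl.2

/-- Appendix E.B: the Bethe ansatz amplitudes (E.18) satisfy the vanishing conditions
(E.14): `A_M(Q)·G(Q(j+1), Qj) + A_M(Q∘π_j)·G(Qj, Q(j+1)) = 0` for every permutation `Q`
and adjacent transposition `π_j`. -/
theorem amp_vanishing (M : ℕ) (Δ : ℂ) (k : Fin M → ℂ)
    (hG : ∀ a b : Fin M, a ≠ b → Gfac M Δ k a b ≠ 0)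
    (Q : Equiv.Perm (Fin M)) (j : Fin M) (hj : (j : ℕ) + 1 < M) :
    ampXXZ M Δ k Q * Gfac M Δ k (Q ⟨(j : ℕ) + 1, hj⟩) (Q j)
      + ampXXZ M Δ k (Q * Equiv.swap j ⟨(j : ℕ) + 1, hj⟩) * Gfac M Δ k (Q j) (Q ⟨(j : ℕ) + 1, hj⟩)
      = 0 := by
  set j' : Fin M := ⟨(j : ℕ) + 1, hj⟩ with hj'def
  have hv : (j' : ℕ) = (j : ℕ) + 1 := rfl
  have hjlt : j < j' := by simp [Fin.lt_def, hv]
  have hjj' : j ≠ j' := ne_of_lt hjlt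
  set σ : Equiv.Perm (Fin M) := Equiv.swap j j' with hσ
  set S : Finset (Fin M × Fin M) :=
    univ.filter (fun p : Fin M × Fin M => p.1 < p.2) with hS
  have hmem : (j, j') ∈ S := by simp [hS, hjlt]
  have key : ∀ a b : Fin M, a < b → (a, b) ≠ (j, j') → σ a < σ b := by
    intro a b hab hne
    have hne' : ¬(a = j ∧ b = j') := by
      intro ⟨h1, h2⟩; exact hne (by rw [h1, h2])
    rw [Fin.lt_def] at hab ⊢
    rw [hσ, Equiv.swap_apply_def, Equiv.swap_apply_def]
    split_ifs <;> simp_all [Fin.ext_iff, hv] <;> omega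
  have hmap : ∀ p ∈ S.erase (j, j'), (σ p.1, σ p.2) ∈ S.erase (j, j') := by
    intro p hp
    rcases Finset.mem_erase.mp hp with ⟨hpne, hpS⟩
    have hplt : p.1 < p.2 := by simpa [hS] using hpS
    have hpne' : (p.1, p.2) ≠ (j, j') := fun h => hpne (by rw [← h])
    have hlt := key p.1 p.2 hplt hpne'
    refine Finset.mem_erase.mpr ⟨?_, by simp [hS, hlt]⟩
    intro h
    have h1 : σ p.1 = j := congrArg Prod.fst h
    have h2 : σ p.2 = j' := congrArg Prod.snd h
    have e1 : p.1 = j' := by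
      have := congrArg σ h1
      simpa [hσ, Equiv.swap_apply_self, Equiv.swap_apply_left] using this
    have e2 : p.2 = j := by
      have := congrArg σ h2
      simpa [hσ, Equiv.swap_apply_self, Equiv.swap_apply_right] using this
    rw [e1, e2] at hplt
    exact absurd (lt_trans hjlt hplt) (lt_irrefl _)
  have hprod : ∏ p ∈ S.erase (j, j'), Gfac M Δ k (Q (σ p.1)) (Q (σ p.2))
      = ∏ p ∈ S.erase (j, j'), Gfac M Δ k (Q p.1) (Q p.2) := by
    refine Finset.prod_nbij' (fun p => (σ p.1, σ p.2)) (fun p => (σ p.1, σ p.2))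
      hmap hmap ?_ ?_ ?_
    · intro p _; simp [hσ, Equiv.swap_apply_self]
    · intro p _; simp [hσ, Equiv.swap_apply_self]
    · intro p _; rfl
  have hmain : (∏ p ∈ S, Gfac M Δ k (Q (σ p.1)) (Q (σ p.2))) * Gfac M Δ k (Q j) (Q j')
      = (∏ p ∈ S, Gfac M Δ k (Q p.1) (Q p.2)) * Gfac M Δ k (Q j') (Q j) := by
    rw [← Finset.mul_prod_erase S _ hmem, ← Finset.mul_prod_erase S _ hmem, hprod]
    simp only [hσ, Equiv.swap_apply_left, Equiv.swap_apply_right]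
    ring
  -- denominator
  set D : ℂ := ∏ p ∈ S, Gfac M Δ k p.1 p.2 with hD
  have hDne : D ≠ 0 := by
    rw [hD]
    apply Finset.prod_ne_zero_iff.mpr
    intro p hp
    have hplt : p.1 < p.2 := by simpa [hS] using hp
    exact hG p.1 p.2 (ne_of_lt hplt)
  have hsign : ((Equiv.Perm.sign (Q * σ) : ℤ) : ℂ)
      = -((Equiv.Perm.sign Q : ℤ) : ℂ) := by
    rw [Equiv.Perm.sign_mul, hσ, Equiv.Perm.sign_swap hjj']
    push_cast
    ring
  have hamp : ∀ P : Equiv.Perm (Fin M), ampXXZ M Δ k P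
      = ((Equiv.Perm.sign P : ℤ) : ℂ) * ((∏ p ∈ S, Gfac M Δ k (P p.1) (P p.2)) / D) := by
    intro P
    rw [ampXXZ, Finset.prod_div_distrib]
  have happ : ∀ p : Fin M × Fin M, (Q * σ) p.1 = Q (σ p.1) ∧ (Q * σ) p.2 = Q (σ p.2) := by
    intro p; exact ⟨rfl, rfl⟩
  rw [hamp, hamp, hsign]
  simp only [Equiv.Perm.mul_apply]
  set sQ : ℂ := ((Equiv.Perm.sign Q : ℤ) : ℂ) with hsQ
  set N : ℂ := ∏ p ∈ S, Gfac M Δ k (Q p.1) (Q p.2) with hN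
  set N' : ℂ := ∏ p ∈ S, Gfac M Δ k (Q (σ p.1)) (Q (σ p.2)) with hN'
  field_simp
  linear_combination sQ * hmain - 2 * sQ * hmain
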